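/- For integers m ≥ 0, n ≥ 1, the integral ∫₀¹ log^m(x)·log^n(1-x) dx/x converges absolutely and equals (-1)^{m+n}·m!·n!·ζ({1}^{n-1}, m+2), where ζ({1}^{n-1},m+2) denotes the multiple zeta value with n-1 leading 1's. -/

import Mathlib

open MeasureTheory Finset

/-- The multiple zeta value `ζ(e₀, …, e_{k-1}) = ∑_{0 < n₀ < ⋯ < n_{k-1}} ∏ nᵢ^{-eᵢ}`. -/
noncomputable def mzv {k : ℕ} (e : Fin k → ℕ) : ℝ :=
  ∑' f : {f : Fin k → ℕ // StrictMono f ∧ ∀ i, 0 < f i},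
    ∏ i, ((f.1 i : ℝ) ^ e i)⁻¹

/-- `ζ({1}^{a-1}, b)`: the multiple zeta value of depth `a` whose first `a-1`
entries are `1` and whose last entry is `b`. -/
noncomputable def zetaOnes (a b : ℕ) : ℝ :=
  mzv (fun i : Fin a => if (i : ℕ) + 1 = a then b else 1)

open scoped ENNReal NNReal
open Equiv (Perm)

namespace LogMomentAux

/-! ### Tsum of products over pi types (ENNReal Fubini) -/

lemma tsum_pi_prod {n : ℕ} (g : Fin n → ℕ → ℝ≥0∞) :
    ∑' k : Fin n → ℕ, ∏ i, g i (k i) = ∏ i, ∑' j, g i j := by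
  induction n with
  | zero =>
      rw [tsum_eq_single (fun i => i.elim0)]
      · simp
      · intro k hk; exact absurd (funext fun i => i.elim0) hk
  | succ n ih =>
      rw [← (Fin.consEquiv (fun _ => ℕ)).tsum_eq]
      have : ∀ p : ℕ × (Fin n → ℕ),
          (∏ i, g i (Fin.consEquiv (fun _ => ℕ) p i)) =
            g 0 p.1 * ∏ i : Fin n, g i.succ (p.2 i) := by
        intro p
        rw [Fin.prod_univ_succ]
        simp [Fin.consEquiv]
      simp_rw [this]
      rw [ENNReal.tsum_prod']
      simp_rw [ENNReal.tsum_mul_left]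
      rw [ENNReal.tsum_mul_right, ih (fun i => g i.succ), Fin.prod_univ_succ]

/-! ### Finset intervals in `Fin` -/

lemma Iic_zero_fin {n : ℕ} (h : 0 < n) : Finset.Iic (⟨0, h⟩ : Fin n) = {⟨0, h⟩} := by
  ext i
  simp [Fin.le_def, Fin.ext_iff, Nat.le_zero]

lemma Iic_succ_fin {n v : ℕ} (h : v + 1 < n) :
    Finset.Iic (⟨v + 1, h⟩ : Fin n) =
      insert (⟨v + 1, h⟩ : Fin n) (Finset.Iic (⟨v, by omega⟩ : Fin n)) := by
  ext i
  simp only [Finset.mem_Iic, Finset.mem_insert, Fin.le_def, Fin.ext_iff]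
  omega

lemma Ici_succ_map {n : ℕ} (j : Fin n) :
    Finset.Ici j.succ = (Finset.Ici j).map (Fin.succEmb n) := by
  ext i
  simp only [Finset.mem_Ici, Finset.mem_map, Fin.succEmb]
  constructor
  · intro hi
    have h0 : i ≠ 0 := by
      rintro rfl
      simp [Fin.le_def] at hi
    obtain ⟨i', rfl⟩ := Fin.exists_succ_eq.2 h0
    exact ⟨i', Fin.succ_le_succ_iff.1 hi, rfl⟩
  · rintro ⟨i', hi', rfl⟩
    exact Fin.succ_le_succ_iff.2 hi'

lemma Iic_rev_map {n : ℕ} (j : Fin n) :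
    Finset.Iic j.rev = (Finset.Ici j).map Fin.revPerm.toEmbedding := by
  ext i
  simp only [Finset.mem_Iic, Finset.mem_map, Finset.mem_Ici, Equiv.coe_toEmbedding,
    Fin.revPerm_apply]
  constructor
  · intro hi
    refine ⟨i.rev, ?_, Fin.rev_rev i⟩
    rw [← Fin.rev_rev i, Fin.rev_le_rev] at hi
    exact hi
  · rintro ⟨i', hi', rfl⟩
    exact Fin.rev_le_rev.2 hi'

/-! ### The permutation (symmetrization) identity -/

lemma inv_prod_eq_sum_perm_Ici {n : ℕ} (x : Fin n → ℝ≥0∞)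
    (h0 : ∀ i, x i ≠ 0) (ht : ∀ i, x i ≠ ∞) :
    (∏ i, x i)⁻¹ = ∑ σ : Perm (Fin n), ∏ j, (∑ i ∈ Finset.Ici j, x (σ i))⁻¹ := by
  induction n with
  | zero =>
      simp [Finset.univ_unique]
  | succ n ih =>
      set S := ∑ i, x i with hSdef
      have hS0 : S ≠ 0 := fun h =>
        h0 0 (Finset.sum_eq_zero_iff.1 h 0 (Finset.mem_univ 0))
      have hSt : S ≠ ∞ :=
        ne_of_lt (ENNReal.sum_lt_top.2 fun i _ => (ht i).lt_top)
      have key : ∀ (p : Fin (n+1)) (e : Perm (Fin n)),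
          (∏ j, (∑ i ∈ Finset.Ici j, x (Equiv.Perm.decomposeFin.symm (p, e) i))⁻¹) =
          S⁻¹ * ∏ j : Fin n, (∑ i ∈ Finset.Ici j, x (Equiv.swap 0 p (e i).succ))⁻¹ := by
        intro p e
        rw [Fin.prod_univ_succ]
        congr 1
        · congr 1
          have hIci : Finset.Ici (0 : Fin (n+1)) = Finset.univ := by
            ext i; simp [Fin.zero_le]
          rw [hIci]
          exact Equiv.sum_comp (Equiv.Perm.decomposeFin.symm (p, e)) x
        · refine Finset.prod_congr rfl fun j _ => ?_
          congr 1
          rw [Ici_succ_map, Finset.sum_map]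
          refine Finset.sum_congr rfl fun i _ => ?_
          simp [Fin.succEmb, Equiv.Perm.decomposeFin_symm_apply_succ]
      have prodsplit : ∀ p : Fin (n+1),
          (∏ i, x i) = x p * ∏ i : Fin n, x (Equiv.swap 0 p i.succ) := by
        intro p
        calc ∏ i, x i = ∏ i, x (Equiv.swap 0 p i) :=
              (Equiv.prod_comp (Equiv.swap 0 p) x).symm
          _ = x (Equiv.swap 0 p 0) * ∏ i : Fin n, x (Equiv.swap 0 p i.succ) :=
              Fin.prod_univ_succ _
          _ = x p * ∏ i : Fin n, x (Equiv.swap 0 p i.succ) := by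
              rw [Equiv.swap_apply_left]
      symm
      calc ∑ σ : Perm (Fin (n+1)), ∏ j, (∑ i ∈ Finset.Ici j, x (σ i))⁻¹
          = ∑ pe : Fin (n+1) × Perm (Fin n),
              ∏ j, (∑ i ∈ Finset.Ici j, x (Equiv.Perm.decomposeFin.symm pe i))⁻¹ :=
            (Equiv.sum_comp Equiv.Perm.decomposeFin.symm _).symm
        _ = ∑ p : Fin (n+1), ∑ e : Perm (Fin n),
              ∏ j, (∑ i ∈ Finset.Ici j, x (Equiv.Perm.decomposeFin.symm (p, e) i))⁻¹ :=
            Fintype.sum_prod_type _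
        _ = ∑ p : Fin (n+1), ∑ e : Perm (Fin n),
              S⁻¹ * ∏ j : Fin n, (∑ i ∈ Finset.Ici j, x (Equiv.swap 0 p (e i).succ))⁻¹ :=
            Finset.sum_congr rfl fun p _ => Finset.sum_congr rfl fun e _ => key p e
        _ = ∑ p : Fin (n+1), S⁻¹ * (∏ i : Fin n, x (Equiv.swap 0 p i.succ))⁻¹ := by
            refine Finset.sum_congr rfl fun p _ => ?_
            rw [← Finset.mul_sum]
            congr 1
            exact (ih (fun i => x (Equiv.swap 0 p i.succ)) (fun i => h0 _)
              (fun i => ht _)).symm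
        _ = ∑ p : Fin (n+1), S⁻¹ * (x p * (∏ i, x i)⁻¹) := by
            refine Finset.sum_congr rfl fun p _ => ?_
            congr 1
            have hQ0 : (∏ i : Fin n, x (Equiv.swap 0 p i.succ)) ≠ 0 :=
              Finset.prod_ne_zero_iff.2 fun i _ => h0 _
            rw [prodsplit p, ENNReal.mul_inv (Or.inl (h0 p)) (Or.inl (ht p)),
              ← mul_assoc, ENNReal.mul_inv_cancel (h0 p) (ht p), one_mul]
        _ = S⁻¹ * ∑ p : Fin (n+1), x p * (∏ i, x i)⁻¹ := by
            rw [Finset.mul_sum]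
        _ = S⁻¹ * (S * (∏ i, x i)⁻¹) := by rw [← Finset.sum_mul]
        _ = (∏ i, x i)⁻¹ := by
            rw [← mul_assoc, ENNReal.inv_mul_cancel hS0 hSt, one_mul]

lemma inv_prod_eq_sum_perm_Iic {n : ℕ} (x : Fin n → ℝ≥0∞)
    (h0 : ∀ i, x i ≠ 0) (ht : ∀ i, x i ≠ ∞) :
    (∏ i, x i)⁻¹ = ∑ σ : Perm (Fin n), ∏ j, (∑ i ∈ Finset.Iic j, x (σ i))⁻¹ := by
  rw [inv_prod_eq_sum_perm_Ici x h0 ht]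
  rw [← Equiv.sum_comp (Equiv.mulRight Fin.revPerm)
    (fun σ => ∏ j, (∑ i ∈ Finset.Ici j, x (σ i))⁻¹)]
  refine Finset.sum_congr rfl fun σ _ => ?_
  rw [← Equiv.prod_comp Fin.revPerm (fun j => (∑ i ∈ Finset.Iic j, x (σ i))⁻¹)]
  refine Finset.prod_congr rfl fun j _ => ?_
  congr 1
  simp only [Fin.revPerm_apply]
  rw [Iic_rev_map, Finset.sum_map]
  simp [Equiv.Perm.mul_apply]

/-! ### The partial-sum bijection -/

variable {n : ℕ}

/-- Prefix sums: `toStrict k j = ∑_{i ≤ j} (k i + 1)`. -/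
def toStrict (k : Fin n → ℕ) : Fin n → ℕ := fun j => ∑ i ∈ Finset.Iic j, (k i + 1)

lemma toStrict_strictMono (k : Fin n → ℕ) : StrictMono (toStrict k) := by
  intro j j' hj
  refine Finset.sum_lt_sum_of_subset ?_ (i := j') ?_ ?_ ?_ ?_
  · exact Finset.Iic_subset_Iic.2 hj.le
  · exact Finset.mem_Iic.2 le_rfl
  · exact fun hc => absurd (Finset.mem_Iic.1 hc) (not_le.2 hj)
  · omega
  · intro i _ _; omega

lemma toStrict_pos (k : Fin n → ℕ) (j : Fin n) : 0 < toStrict k j :=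
  Finset.sum_pos (fun i _ => by omega) ⟨j, Finset.mem_Iic.2 le_rfl⟩

/-- Recover `k` from its prefix sums. -/
def fromStrict (f : Fin n → ℕ) : Fin n → ℕ := fun j =>
  f j - (if h : (j : ℕ) = 0 then 0 else f ⟨(j : ℕ) - 1, by omega⟩) - 1

lemma toStrict_succ (k : Fin n → ℕ) {v : ℕ} (h : v + 1 < n) :
    toStrict k ⟨v + 1, h⟩ = (k ⟨v + 1, h⟩ + 1) + toStrict k ⟨v, by omega⟩ := by
  unfold toStrict
  rw [Iic_succ_fin h, Finset.sum_insert (by simp [Fin.ext_iff])]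

lemma toStrict_zero (k : Fin n → ℕ) (h : 0 < n) :
    toStrict k ⟨0, h⟩ = k ⟨0, h⟩ + 1 := by
  unfold toStrict
  rw [Iic_zero_fin h, Finset.sum_singleton]

lemma fromStrict_toStrict (k : Fin n → ℕ) : fromStrict (toStrict k) = k := by
  funext j
  obtain ⟨v, hv⟩ := j
  unfold fromStrict
  cases v with
  | zero => simp [toStrict_zero k hv]
  | succ v =>
      simp only [Nat.succ_ne_zero, dite_false, Nat.add_sub_cancel]
      rw [toStrict_succ k hv]
      omega

lemma toStrict_fromStrict (f : Fin n → ℕ) (hf : StrictMono f) (hp : ∀ i, 0 < f i) :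
    toStrict (fromStrict f) = f := by
  funext j
  obtain ⟨v, hv⟩ := j
  induction v with
  | zero =>
      rw [toStrict_zero _ hv]
      have := hp ⟨0, hv⟩
      simp only [fromStrict, dite_true]
      omega
  | succ v ihv =>
      rw [toStrict_succ _ hv, ihv (by omega)]
      simp only [fromStrict, Nat.succ_ne_zero, dite_false, Nat.add_sub_cancel]
      have : f ⟨v, by omega⟩ < f ⟨v + 1, hv⟩ := hf (by simp [Fin.lt_def])
      omega

/-- The partial-sum bijection between `Fin n → ℕ` and strictly monotone
positive functions. -/
noncomputable def strictEquiv (n : ℕ) :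
    (Fin n → ℕ) ≃ {f : Fin n → ℕ // StrictMono f ∧ ∀ i, 0 < f i} where
  toFun k := ⟨toStrict k, toStrict_strictMono k, toStrict_pos k⟩
  invFun f := fromStrict f.1
  left_inv k := fromStrict_toStrict k
  right_inv f := Subtype.ext (toStrict_fromStrict f.1 f.2.1 f.2.2)

/-! ### The one-dimensional integral -/

lemma exp_neg_image : (fun t : ℝ => Real.exp (-t)) '' (Set.Ioi 0) = Set.Ioo 0 1 := by
  ext x
  constructor
  · rintro ⟨t, ht, rfl⟩
    exact ⟨Real.exp_pos _, by rw [Real.exp_lt_one_iff]; simpa using ht⟩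
  · rintro ⟨hx0, hx1⟩
    exact ⟨-Real.log x, by simpa using Real.log_neg hx0 hx1,
      by simp [Real.exp_log hx0]⟩

lemma exp_neg_deriv : ∀ t ∈ Set.Ioi (0:ℝ),
    HasDerivWithinAt (fun t : ℝ => Real.exp (-t)) (-Real.exp (-t)) (Set.Ioi 0) t := by
  intro t _
  simpa [Function.comp_def] using ((Real.hasDerivAt_exp (-t)).comp t (hasDerivAt_neg t)).hasDerivWithinAt

lemma exp_neg_injOn : Set.InjOn (fun t : ℝ => Real.exp (-t)) (Set.Ioi 0) :=
  fun a _ b _ h => neg_injective (Real.exp_injective h)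

lemma integrand_transform (m S : ℕ) (t : ℝ) :
    |(-Real.exp (-t))| • ((-Real.log (Real.exp (-t)))^m * (Real.exp (-t))^S / Real.exp (-t)) =
      t ^ m * Real.exp (-((S:ℝ) * t)) := by
  rw [abs_neg, abs_of_pos (Real.exp_pos _), Real.log_exp, neg_neg, smul_eq_mul]
  rw [mul_comm (Real.exp (-t)), div_mul_cancel₀ _ (Real.exp_ne_zero _),
    ← Real.exp_nat_mul, mul_neg]

lemma integrableOn_pow_exp (m S : ℕ) (hS : 1 ≤ S) :
    IntegrableOn (fun t : ℝ => t ^ m * Real.exp (-((S:ℝ) * t))) (Set.Ioi 0) := by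
  have h := integrableOn_rpow_mul_exp_neg_mul_rpow (p := 1) (s := (m:ℝ)) (b := (S:ℝ))
    (lt_of_lt_of_le neg_one_lt_zero (Nat.cast_nonneg m)) zero_lt_one (by exact_mod_cast hS)
  refine (integrableOn_congr_fun (fun t ht => ?_) measurableSet_Ioi).1 h
  rw [Real.rpow_one, Real.rpow_natCast, neg_mul]

lemma integral_pow_exp (m S : ℕ) (hS : 1 ≤ S) :
    ∫ t in Set.Ioi (0:ℝ), t ^ m * Real.exp (-((S:ℝ) * t)) =
      m.factorial / (S:ℝ) ^ (m + 1) := by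
  have h := Real.integral_rpow_mul_exp_neg_mul_Ioi (a := (m:ℝ) + 1) (r := (S:ℝ))
    (by positivity) (by exact_mod_cast hS)
  have e1 : ∫ t in Set.Ioi (0:ℝ), t ^ m * Real.exp (-((S:ℝ) * t)) =
      ∫ t in Set.Ioi (0:ℝ), t ^ ((m:ℝ) + 1 - 1) * Real.exp (-((S:ℝ) * t)) :=
    setIntegral_congr_fun measurableSet_Ioi (fun t _ => by
      show t ^ m * Real.exp (-((S:ℝ) * t)) = t ^ ((m:ℝ) + 1 - 1) * Real.exp (-((S:ℝ) * t))
      rw [show (m:ℝ) + 1 - 1 = (m:ℝ) by ring, Real.rpow_natCast])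
  rw [e1, h, Real.Gamma_nat_eq_factorial,
    show ((m:ℝ) + 1) = ((m + 1 : ℕ) : ℝ) by push_cast; ring, Real.rpow_natCast,
    div_pow, one_pow, div_mul_eq_mul_div, one_mul]

lemma integrableOn_Ioo_log_pow (m S : ℕ) (hS : 1 ≤ S) :
    IntegrableOn (fun x : ℝ => (-Real.log x)^m * x^S / x) (Set.Ioo 0 1) ∧
    ∫ x in Set.Ioo (0:ℝ) 1, (-Real.log x)^m * x^S / x = m.factorial / (S:ℝ)^(m+1) := by
  constructor
  · rw [← exp_neg_image,
      integrableOn_image_iff_integrableOn_abs_deriv_smul measurableSet_Ioi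
        exp_neg_deriv exp_neg_injOn]
    refine ((integrableOn_pow_exp m S hS).congr_fun (fun t ht => ?_) measurableSet_Ioi)
    exact (integrand_transform m S t).symm
  · rw [← exp_neg_image,
      integral_image_eq_integral_abs_deriv_smul measurableSet_Ioi
        exp_neg_deriv exp_neg_injOn]
    rw [← integral_pow_exp m S hS]
    congr 1
    funext t
    exact integrand_transform m S t

lemma lintegral_Ioo_log_pow (m S : ℕ) (hS : 1 ≤ S) :
    ∫⁻ x in Set.Ioo (0:ℝ) 1, ENNReal.ofReal ((-Real.log x)^m * x^S / x) =
      ENNReal.ofReal (m.factorial / (S:ℝ)^(m+1)) := by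
  have hpos : (0 : ℝ → ℝ) ≤ᵐ[volume.restrict (Set.Ioo (0:ℝ) 1)]
      fun x => (-Real.log x)^m * x^S / x := by
    refine (ae_restrict_iff' measurableSet_Ioo).2 (Filter.Eventually.of_forall fun x hx => ?_)
    have h1 : Real.log x ≤ 0 := Real.log_nonpos hx.1.le hx.2.le
    have h0 : (0:ℝ) < x := hx.1
    have h2 : 0 ≤ -Real.log x := by linarith
    simp only [Pi.zero_apply]
    positivity
  rw [← ofReal_integral_eq_lintegral_ofReal (integrableOn_Ioo_log_pow m S hS).1 hpos,
    (integrableOn_Ioo_log_pow m S hS).2]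

/-! ### Notation for the combinatorial sums -/

/-- `Sk k = ∑ (k i + 1)`. -/
def Sk {n : ℕ} (k : Fin n → ℕ) : ℕ := ∑ i, (k i + 1)

/-- `Ck k = ∏ (k i + 1)`. -/
def Ck {n : ℕ} (k : Fin n → ℕ) : ℕ := ∏ i, (k i + 1)

/-- The exponent vector `(1, …, 1, m+2)`. -/
def Ex (n m : ℕ) : Fin n → ℕ := fun j => if (j : ℕ) + 1 = n then m + 2 else 1

lemma n_le_Sk {n : ℕ} (k : Fin n → ℕ) : n ≤ Sk k := by
  have : ∑ _i : Fin n, 1 ≤ ∑ i, (k i + 1) :=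
    Finset.sum_le_sum fun i _ => Nat.le_add_left 1 (k i)
  simpa [Sk] using this

lemma toStrict_last {n : ℕ} (hn : 0 < n) (k : Fin n → ℕ) :
    toStrict k ⟨n - 1, by omega⟩ = Sk k := by
  unfold toStrict Sk
  refine Finset.sum_congr ?_ fun _ _ => rfl
  ext i
  simp only [Finset.mem_Iic, Finset.mem_univ, iff_true, Fin.le_def]
  have := i.isLt
  omega

lemma prod_pow_split {n : ℕ} (hn : 1 ≤ n) (m : ℕ) (P : Fin n → ℕ) (hP : ∀ j, 0 < P j) :
    (∏ j, ((P j : ℝ≥0∞))⁻¹) * (((P ⟨n - 1, by omega⟩ : ℝ≥0∞)) ^ (m + 1))⁻¹ =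
      ∏ j, ((P j : ℝ≥0∞) ^ (Ex n m j))⁻¹ := by
  set lst : Fin n := ⟨n - 1, by omega⟩ with hlst
  rw [← Finset.mul_prod_erase Finset.univ (fun j => ((P j : ℝ≥0∞))⁻¹) (Finset.mem_univ lst),
      ← Finset.mul_prod_erase Finset.univ (fun j => ((P j : ℝ≥0∞) ^ (Ex n m j))⁻¹)
        (Finset.mem_univ lst)]
  have h1 : ∀ j ∈ Finset.univ.erase lst, ((P j : ℝ≥0∞) ^ Ex n m j)⁻¹ = ((P j : ℝ≥0∞))⁻¹ := by
    intro j hj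
    have hj1 : (j : ℕ) + 1 ≠ n := by
      intro h
      exact (Finset.mem_erase.1 hj).1 (Fin.ext (show (j : ℕ) = n - 1 by omega))
    rw [Ex, if_neg hj1, pow_one]
  rw [Finset.prod_congr rfl h1]
  have h2 : Ex n m lst = m + 2 := by
    have : (lst : ℕ) + 1 = n := by simp [hlst]; omega
    rw [Ex, if_pos this]
  rw [h2]
  have hne : ((P lst : ℝ≥0∞)) ≠ 0 := Nat.cast_ne_zero.2 (hP lst).ne'
  have hnt : ((P lst : ℝ≥0∞)) ≠ ∞ := ENNReal.natCast_ne_top _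
  have h3 : ((P lst : ℝ≥0∞) ^ (m + 2))⁻¹ =
      ((P lst : ℝ≥0∞))⁻¹ * ((P lst : ℝ≥0∞) ^ (m + 1))⁻¹ := by
    rw [show m + 2 = 1 + (m + 1) by ring, pow_add, pow_one,
      ENNReal.mul_inv (Or.inl hne) (Or.inl hnt)]
  rw [h3]
  ring

/-- Reindexing a function space by composition with a permutation. -/
def compEquiv {n : ℕ} (σ : Perm (Fin n)) : (Fin n → ℕ) ≃ (Fin n → ℕ) where
  toFun k := k ∘ σ
  invFun k := k ∘ σ.symm
  left_inv k := by funext i; simp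
  right_inv k := by funext i; simp

lemma perm_expand {n : ℕ} (hn : 1 ≤ n) (m : ℕ) (k : Fin n → ℕ) :
    (Ck k : ℝ≥0∞)⁻¹ * (((Sk k : ℝ≥0∞)) ^ (m + 1))⁻¹ =
      ∑ σ : Perm (Fin n), ∏ j, ((toStrict (k ∘ σ) j : ℝ≥0∞) ^ (Ex n m j))⁻¹ := by
  have base := inv_prod_eq_sum_perm_Iic (fun i => ((k i + 1 : ℕ) : ℝ≥0∞))
    (fun i => Nat.cast_ne_zero.2 (by omega)) (fun i => ENNReal.natCast_ne_top _)
  have hCk : (Ck k : ℝ≥0∞) = ∏ i, ((k i + 1 : ℕ) : ℝ≥0∞) := by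
    rw [Ck]; push_cast; rfl
  rw [hCk, base, Finset.sum_mul]
  refine Finset.sum_congr rfl fun σ _ => ?_
  have hsum : ∀ j : Fin n, (∑ i ∈ Finset.Iic j, ((k (σ i) + 1 : ℕ) : ℝ≥0∞)) =
      ((toStrict (k ∘ σ) j : ℕ) : ℝ≥0∞) := by
    intro j
    rw [toStrict]; push_cast; rfl
  simp_rw [hsum]
  have hSk : ((Sk k : ℕ) : ℝ≥0∞) = ((toStrict (k ∘ σ) ⟨n - 1, by omega⟩ : ℕ) : ℝ≥0∞) := by
    rw [toStrict_last (by omega) (k ∘ σ)]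
    congr 1
    rw [Sk, Sk]
    exact (Equiv.sum_comp σ (fun i => k i + 1)).symm
  rw [hSk]
  exact prod_pow_split hn m (toStrict (k ∘ σ)) (toStrict_pos _)

lemma sym_tsum {n : ℕ} (hn : 1 ≤ n) (m : ℕ) :
    ∑' k : Fin n → ℕ, (Ck k : ℝ≥0∞)⁻¹ * (((Sk k : ℝ≥0∞)) ^ (m + 1))⁻¹ =
      (n.factorial : ℝ≥0∞) *
        ∑' k : Fin n → ℕ, ∏ j, ((toStrict k j : ℝ≥0∞) ^ (Ex n m j))⁻¹ := by
  calc ∑' k : Fin n → ℕ, (Ck k : ℝ≥0∞)⁻¹ * (((Sk k : ℝ≥0∞)) ^ (m + 1))⁻¹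
      = ∑' k : Fin n → ℕ, ∑ σ : Perm (Fin n),
          ∏ j, ((toStrict (k ∘ σ) j : ℝ≥0∞) ^ (Ex n m j))⁻¹ :=
        tsum_congr fun k => perm_expand hn m k
    _ = ∑ σ : Perm (Fin n), ∑' k : Fin n → ℕ,
          ∏ j, ((toStrict (k ∘ σ) j : ℝ≥0∞) ^ (Ex n m j))⁻¹ :=
        Summable.tsum_finsetSum fun _ _ => ENNReal.summable
    _ = ∑ σ : Perm (Fin n), ∑' k : Fin n → ℕ,
          ∏ j, ((toStrict k j : ℝ≥0∞) ^ (Ex n m j))⁻¹ :=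
        Finset.sum_congr rfl fun σ _ =>
          (compEquiv σ).tsum_eq fun k => ∏ j, ((toStrict k j : ℝ≥0∞) ^ (Ex n m j))⁻¹
    _ = (n.factorial : ℝ≥0∞) *
          ∑' k : Fin n → ℕ, ∏ j, ((toStrict k j : ℝ≥0∞) ^ (Ex n m j))⁻¹ := by
        rw [Finset.sum_const, Finset.card_univ, Fintype.card_perm, Fintype.card_fin,
          nsmul_eq_mul]

/-! ### The expansion of the integrand as a series -/

lemma series_expand {n : ℕ} {x : ℝ} (hx : x ∈ Set.Ioo (0:ℝ) 1) (m : ℕ) :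
    ENNReal.ofReal ((-Real.log x) ^ m * (-Real.log (1 - x)) ^ n / x) =
      ∑' k : Fin n → ℕ,
        ENNReal.ofReal ((-Real.log x) ^ m * x ^ Sk k / x * ((Ck k : ℝ))⁻¹) := by
  obtain ⟨hx0, hx1⟩ := hx
  have hlx : 0 ≤ -Real.log x := neg_nonneg.2 (Real.log_nonpos hx0.le hx1.le)
  have hl1x : 0 ≤ -Real.log (1 - x) :=
    neg_nonneg.2 (Real.log_nonpos (by linarith) (by linarith))
  have hsum : HasSum (fun j : ℕ => x ^ (j + 1) / (j + 1)) (-Real.log (1 - x)) :=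
    Real.hasSum_pow_div_log_of_abs_lt_one (by rw [abs_of_pos hx0]; exact hx1)
  have e0 : (-Real.log x) ^ m * (-Real.log (1 - x)) ^ n / x =
      ((-Real.log x) ^ m / x) * (-Real.log (1 - x)) ^ n := by ring
  rw [e0, ENNReal.ofReal_mul (by positivity), ENNReal.ofReal_pow hl1x,
    ← hsum.tsum_eq, ENNReal.ofReal_tsum_of_nonneg (fun j => by positivity) hsum.summable]
  have hpow : (∑' j : ℕ, ENNReal.ofReal (x ^ (j + 1) / (j + 1))) ^ n =
      ∑' k : Fin n → ℕ, ∏ i, ENNReal.ofReal (x ^ (k i + 1) / ((k i : ℝ) + 1)) := by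
    rw [tsum_pi_prod (fun _ j => ENNReal.ofReal (x ^ (j + 1) / ((j : ℝ) + 1)))]
    rw [Finset.prod_const, Finset.card_univ, Fintype.card_fin]
  rw [hpow, ← ENNReal.tsum_mul_left]
  refine tsum_congr fun k => ?_
  rw [← ENNReal.ofReal_prod_of_nonneg (fun i _ => by positivity)]
  rw [← ENNReal.ofReal_mul (by positivity)]
  congr 1
  rw [Finset.prod_div_distrib, Finset.prod_pow_eq_pow_sum]
  have hC : (∏ i, ((k i : ℝ) + 1)) = ((Ck k : ℕ) : ℝ) := by
    rw [Ck]; push_cast; rfl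
  have hSkk : (∑ i, (k i + 1)) = Sk k := rfl
  rw [hC, hSkk]
  ring

/-! ### The key lintegral computation -/

lemma key_lintegral {n : ℕ} (hn : 1 ≤ n) (m : ℕ) :
    ∫⁻ x in Set.Ioo (0:ℝ) 1,
        ENNReal.ofReal ((-Real.log x) ^ m * (-Real.log (1 - x)) ^ n / x) =
      (m.factorial : ℝ≥0∞) *
        ∑' k : Fin n → ℕ, (Ck k : ℝ≥0∞)⁻¹ * (((Sk k : ℝ≥0∞)) ^ (m + 1))⁻¹ := by
  rw [setLIntegral_congr_fun measurableSet_Ioo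
    (fun x hx => series_expand hx m)]
  have hmeas : ∀ k : Fin n → ℕ, Measurable (fun x : ℝ =>
      ENNReal.ofReal ((-Real.log x) ^ m * x ^ Sk k / x * ((Ck k : ℝ))⁻¹)) := by
    intro k
    exact ((((Real.measurable_log.neg.pow_const m).mul
      (measurable_id.pow_const (Sk k))).div measurable_id).mul_const _).ennreal_ofReal
  rw [lintegral_tsum fun k => (hmeas k).aemeasurable]
  have hterm : ∀ k : Fin n → ℕ,
      ∫⁻ x in Set.Ioo (0:ℝ) 1,
          ENNReal.ofReal ((-Real.log x) ^ m * x ^ Sk k / x * ((Ck k : ℝ))⁻¹) =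
        (m.factorial : ℝ≥0∞) * ((Ck k : ℝ≥0∞)⁻¹ * (((Sk k : ℝ≥0∞)) ^ (m + 1))⁻¹) := by
    intro k
    have hS1 : 1 ≤ Sk k := le_trans hn (n_le_Sk k)
    have hCpos : 0 < Ck k := Finset.prod_pos fun i _ => Nat.succ_pos _
    have e1 : ∫⁻ x in Set.Ioo (0:ℝ) 1,
        ENNReal.ofReal ((-Real.log x) ^ m * x ^ Sk k / x * ((Ck k : ℝ))⁻¹) =
        ∫⁻ x in Set.Ioo (0:ℝ) 1,
          ENNReal.ofReal ((-Real.log x) ^ m * x ^ Sk k / x) *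
            ENNReal.ofReal (((Ck k : ℝ))⁻¹) := by
      refine setLIntegral_congr_fun measurableSet_Ioo
        (fun x hx => ?_)
      have hlx : 0 ≤ -Real.log x := neg_nonneg.2 (Real.log_nonpos hx.1.le hx.2.le)
      have hx0 : (0:ℝ) < x := hx.1
      rw [← ENNReal.ofReal_mul (by positivity)]
    rw [e1, lintegral_mul_const' _ _ ENNReal.ofReal_ne_top,
      lintegral_Ioo_log_pow m (Sk k) hS1]
    rw [ENNReal.ofReal_div_of_pos (by positivity), ENNReal.ofReal_natCast,
      ENNReal.ofReal_pow (by positivity), ENNReal.ofReal_natCast,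
      ENNReal.ofReal_inv_of_pos (by exact_mod_cast hCpos), ENNReal.ofReal_natCast,
      div_eq_mul_inv]
    ring
  simp_rw [hterm]
  rw [ENNReal.tsum_mul_left]

/-! ### Finiteness -/

lemma Z_ne_top {n : ℕ} (hn : 1 ≤ n) (m : ℕ) :
    ∑' k : Fin n → ℕ, ∏ j, ((toStrict k j : ℝ≥0∞) ^ (Ex n m j))⁻¹ ≠ ∞ := by
  set q : ℝ := ((m : ℝ) + 1) / n with hq
  set p : ℝ := 1 + q with hp
  have hn0 : (0:ℝ) < n := by exact_mod_cast hn
  have hq0 : 0 < q := by positivity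
  have hp1 : 1 < p := by rw [hp]; linarith
  have hbound : ∀ k : Fin n → ℕ,
      (∏ j, ((toStrict k j : ℝ≥0∞) ^ (Ex n m j))⁻¹) ≤
        ∏ i, ((((k i + 1 : ℕ) : ℝ≥0∞)) ^ p)⁻¹ := by
    intro k
    rw [← prod_pow_split hn m (toStrict k) (toStrict_pos k)]
    have hc0 : ∀ i : Fin n, (((k i + 1 : ℕ) : ℝ≥0∞)) ≠ 0 :=
      fun i => Nat.cast_ne_zero.2 (by omega)
    have hct : ∀ i : Fin n, (((k i + 1 : ℕ) : ℝ≥0∞)) ≠ ∞ :=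
      fun i => ENNReal.natCast_ne_top _
    have hlast : ((toStrict k ⟨n - 1, by omega⟩ : ℕ) : ℝ≥0∞) =
        ∑ i, ((k i + 1 : ℕ) : ℝ≥0∞) := by
      rw [toStrict_last (by omega) k, Sk, Nat.cast_sum]
    have h1 : (∏ j, ((toStrict k j : ℝ≥0∞))⁻¹) ≤ ∏ i, (((k i + 1 : ℕ) : ℝ≥0∞))⁻¹ := by
      refine Finset.prod_le_prod' fun j _ => ENNReal.inv_le_inv.2 ?_
      have : k j + 1 ≤ toStrict k j :=
        Finset.single_le_sum (f := fun i => k i + 1) (fun _ _ => Nat.zero_le _)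
          (Finset.mem_Iic.2 le_rfl)
      exact Nat.cast_le.2 this
    have h2 : (((toStrict k ⟨n - 1, by omega⟩ : ℝ≥0∞)) ^ (m + 1))⁻¹ ≤
        ∏ i, ((((k i + 1 : ℕ) : ℝ≥0∞)) ^ q)⁻¹ := by
      have hpair : ((Finset.univ : Finset (Fin n)) : Set (Fin n)).Pairwise
          fun i j => (((k i + 1 : ℕ) : ℝ≥0∞)) ^ q ≠ 0 ∨ (((k j + 1 : ℕ) : ℝ≥0∞)) ^ q ≠ ∞ :=
        fun i _ j _ _ => Or.inl (ENNReal.rpow_pos (pos_iff_ne_zero.2 (hc0 i)) (hct i)).ne'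
      rw [← ENNReal.prod_inv_distrib hpair, ENNReal.prod_rpow_of_nonneg hq0.le]
      refine ENNReal.inv_le_inv.2 ?_
      have hprod_le : (∏ i, ((k i + 1 : ℕ) : ℝ≥0∞)) ≤ (∑ i, ((k i + 1 : ℕ) : ℝ≥0∞)) ^ n := by
        calc ∏ i, ((k i + 1 : ℕ) : ℝ≥0∞) ≤ ∏ _i : Fin n, ∑ i, ((k i + 1 : ℕ) : ℝ≥0∞) :=
              Finset.prod_le_prod' fun i _ =>
                Finset.single_le_sum (f := fun i => ((k i + 1 : ℕ) : ℝ≥0∞))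
                  (fun _ _ => zero_le) (Finset.mem_univ i)
          _ = (∑ i, ((k i + 1 : ℕ) : ℝ≥0∞)) ^ n := by
              rw [Finset.prod_const, Finset.card_univ, Fintype.card_fin]
      calc (∏ i, ((k i + 1 : ℕ) : ℝ≥0∞)) ^ q
            ≤ ((∑ i, ((k i + 1 : ℕ) : ℝ≥0∞)) ^ n) ^ q :=
            ENNReal.rpow_le_rpow hprod_le hq0.le
        _ = ((toStrict k ⟨n - 1, by omega⟩ : ℝ≥0∞)) ^ (m + 1) := by
            rw [hlast, ← ENNReal.rpow_natCast (∑ i, ((k i + 1 : ℕ) : ℝ≥0∞)) n,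
              ← ENNReal.rpow_mul]
            rw [show (n : ℝ) * q = (m : ℝ) + 1 by rw [hq]; field_simp]
            rw [show ((m : ℝ) + 1) = ((m + 1 : ℕ) : ℝ) by push_cast; ring,
              ENNReal.rpow_natCast]
    calc (∏ j, ((toStrict k j : ℝ≥0∞))⁻¹) *
          (((toStrict k ⟨n - 1, by omega⟩ : ℝ≥0∞)) ^ (m + 1))⁻¹
        ≤ (∏ i, (((k i + 1 : ℕ) : ℝ≥0∞))⁻¹) * ∏ i, ((((k i + 1 : ℕ) : ℝ≥0∞)) ^ q)⁻¹ :=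
          mul_le_mul' h1 h2
      _ = ∏ i, ((((k i + 1 : ℕ) : ℝ≥0∞)) ^ p)⁻¹ := by
          rw [← Finset.prod_mul_distrib]
          refine Finset.prod_congr rfl fun i _ => ?_
          rw [hp, ENNReal.rpow_add 1 q (hc0 i) (hct i), ENNReal.rpow_one,
            ENNReal.mul_inv (Or.inl (hc0 i)) (Or.inl (hct i))]
  have hbase : ∑' j : ℕ, ((((j + 1 : ℕ) : ℝ≥0∞)) ^ p)⁻¹ ≠ ∞ := by
    have hsummable : Summable (fun j : ℕ => ((((j + 1 : ℕ) : ℝ)) ^ p)⁻¹) := by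
      have h := Real.summable_nat_rpow_inv.2 hp1
      exact h.comp_injective Nat.succ_injective
    have hterm : ∀ j : ℕ, ((((j + 1 : ℕ) : ℝ≥0∞)) ^ p)⁻¹ =
        ENNReal.ofReal (((((j + 1 : ℕ) : ℝ)) ^ p)⁻¹) := by
      intro j
      rw [← ENNReal.ofReal_natCast (j + 1), ENNReal.ofReal_rpow_of_pos (by positivity),
        ← ENNReal.ofReal_inv_of_pos (by positivity)]
    simp_rw [hterm]
    rw [← ENNReal.ofReal_tsum_of_nonneg (fun j => by positivity) hsummable]
    exact ENNReal.ofReal_ne_top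
  refine ne_of_lt (lt_of_le_of_lt (ENNReal.tsum_le_tsum hbound) ?_)
  rw [tsum_pi_prod (fun _ j => ((((j + 1 : ℕ) : ℝ≥0∞)) ^ p)⁻¹)]
  exact ENNReal.prod_lt_top fun i _ => hbase.lt_top

/-! ### Identification with the multiple zeta value -/

lemma Z_toReal {n : ℕ} (m : ℕ) :
    (∑' k : Fin n → ℕ, ∏ j, ((toStrict k j : ℝ≥0∞) ^ (Ex n m j))⁻¹).toReal =
      zetaOnes n (m + 2) := by
  have h1 : ∑' k : Fin n → ℕ, ∏ j, ((toStrict k j : ℝ≥0∞) ^ (Ex n m j))⁻¹ =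
      ∑' g : {f : Fin n → ℕ // StrictMono f ∧ ∀ i, 0 < f i},
        ∏ j, ((g.1 j : ℝ≥0∞) ^ (Ex n m j))⁻¹ :=
    (strictEquiv n).tsum_eq fun g => ∏ j, ((g.1 j : ℝ≥0∞) ^ (Ex n m j))⁻¹
  rw [h1, ENNReal.tsum_toReal_eq]
  · rw [zetaOnes, mzv]
    refine tsum_congr fun g => ?_
    rw [ENNReal.toReal_prod]
    refine Finset.prod_congr rfl fun j _ => ?_
    rw [ENNReal.toReal_inv, ENNReal.toReal_pow, ENNReal.toReal_natCast]
    rfl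
  · intro g
    refine ENNReal.prod_ne_top fun j _ => ?_
    exact ENNReal.inv_ne_top.2 (pow_ne_zero _ (Nat.cast_ne_zero.2 (g.2.2 j).ne'))

lemma sign_helper (m n : ℕ) (a b c : ℝ) :
    (-1:ℝ) ^ (m + n) * ((-a) ^ m * (-b) ^ n / c) = a ^ m * b ^ n / c := by
  have h1 : ((-1:ℝ) ^ m) ^ 2 = 1 := by
    rw [← pow_mul]; exact Even.neg_one_pow ⟨m, by ring⟩
  have h2 : ((-1:ℝ) ^ n) ^ 2 = 1 := by
    rw [← pow_mul]; exact Even.neg_one_pow ⟨n, by ring⟩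
  rw [neg_pow a, neg_pow b, pow_add]
  calc (-1:ℝ) ^ m * (-1) ^ n * ((-1) ^ m * a ^ m * ((-1) ^ n * b ^ n) / c)
      = (((-1:ℝ) ^ m) ^ 2 * ((-1) ^ n) ^ 2) * (a ^ m * b ^ n / c) := by ring
    _ = a ^ m * b ^ n / c := by rw [h1, h2]; ring

end LogMomentAux

/-- **Logarithmic moments as multiple zeta values.** For `m ≥ 0`, `n ≥ 1`, the integral
`∫₀¹ log^m(x)·log^n(1-x) dx/x` converges absolutely and equals
`(-1)^{m+n}·m!·n!·ζ({1}^{n-1}, m+2)`. -/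
theorem log_moment_integral_eq_mzv (m n : ℕ) (hn : 1 ≤ n) :
    IntervalIntegrable
      (fun x : ℝ => (Real.log x) ^ m * (Real.log (1 - x)) ^ n / x) volume 0 1 ∧
    ∫ x in (0 : ℝ)..1, (Real.log x) ^ m * (Real.log (1 - x)) ^ n / x =
      (-1 : ℝ) ^ (m + n) * m.factorial * n.factorial * zetaOnes n (m + 2) := by
  open LogMomentAux in
  have hsign : ∀ x ∈ Set.Ioo (0:ℝ) 1,
      (Real.log x) ^ m * (Real.log (1 - x)) ^ n / x =
        (-1:ℝ) ^ (m + n) * ((-Real.log x) ^ m * (-Real.log (1 - x)) ^ n / x) :=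
    fun x _ => (sign_helper m n (Real.log x) (Real.log (1 - x)) x).symm
  have hgpos : ∀ x ∈ Set.Ioo (0:ℝ) 1,
      0 ≤ (-Real.log x) ^ m * (-Real.log (1 - x)) ^ n / x := by
    intro x hx
    have h1 : 0 ≤ -Real.log x := neg_nonneg.2 (Real.log_nonpos hx.1.le hx.2.le)
    have h2 : 0 ≤ -Real.log (1 - x) :=
      neg_nonneg.2 (Real.log_nonpos (by linarith [hx.2]) (by linarith [hx.1]))
    have h3 : (0:ℝ) < x := hx.1
    positivity
  have hfmeas : Measurable (fun x : ℝ => (Real.log x) ^ m * (Real.log (1 - x)) ^ n / x) :=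
    ((Real.measurable_log.pow_const m).mul
      ((Real.measurable_log.comp (measurable_const.sub measurable_id)).pow_const n)).div
      measurable_id
  have hgmeas : Measurable (fun x : ℝ => (-Real.log x) ^ m * (-Real.log (1 - x)) ^ n / x) :=
    ((Real.measurable_log.neg.pow_const m).mul
      ((Real.measurable_log.comp (measurable_const.sub measurable_id)).neg.pow_const n)).div
      measurable_id
  have habs : ∀ x ∈ Set.Ioo (0:ℝ) 1,
      ENNReal.ofReal ‖(Real.log x) ^ m * (Real.log (1 - x)) ^ n / x‖ =
        ENNReal.ofReal ((-Real.log x) ^ m * (-Real.log (1 - x)) ^ n / x) := by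
    intro x hx
    congr 1
    rw [Real.norm_eq_abs, hsign x hx, abs_mul, abs_pow, abs_neg, abs_one, one_pow, one_mul,
      abs_of_nonneg (hgpos x hx)]
  have hlint : ∫⁻ x in Set.Ioo (0:ℝ) 1,
      ENNReal.ofReal ((-Real.log x) ^ m * (-Real.log (1 - x)) ^ n / x) =
      (m.factorial : ℝ≥0∞) * ((n.factorial : ℝ≥0∞) *
        ∑' k : Fin n → ℕ, ∏ j, ((toStrict k j : ℝ≥0∞) ^ (Ex n m j))⁻¹) := by
    rw [key_lintegral hn m, sym_tsum hn m]
  have hfin : (m.factorial : ℝ≥0∞) * ((n.factorial : ℝ≥0∞) *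
      ∑' k : Fin n → ℕ, ∏ j, ((toStrict k j : ℝ≥0∞) ^ (Ex n m j))⁻¹) < ∞ :=
    ENNReal.mul_lt_top (ENNReal.natCast_lt_top _)
      (ENNReal.mul_lt_top (ENNReal.natCast_lt_top _) (Z_ne_top hn m).lt_top)
  have hint : IntegrableOn
      (fun x : ℝ => (Real.log x) ^ m * (Real.log (1 - x)) ^ n / x) (Set.Ioo 0 1) := by
    refine ⟨hfmeas.aestronglyMeasurable, ?_⟩
    rw [hasFiniteIntegral_iff_norm]
    rw [setLIntegral_congr_fun measurableSet_Ioo habs, hlint]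
    exact hfin
  constructor
  · rw [intervalIntegrable_iff_integrableOn_Ioo_of_le zero_le_one]
    exact hint
  · rw [intervalIntegral.integral_of_le zero_le_one, integral_Ioc_eq_integral_Ioo,
      setIntegral_congr_fun measurableSet_Ioo (fun x hx => hsign x hx),
      MeasureTheory.integral_const_mul,
      integral_eq_lintegral_of_nonneg_ae
        ((ae_restrict_iff' measurableSet_Ioo).2
          (Filter.Eventually.of_forall fun x hx => hgpos x hx))
        hgmeas.aestronglyMeasurable,
      hlint, ENNReal.toReal_mul, ENNReal.toReal_mul, ENNReal.toReal_natCast, ENNReal.toReal_natCast,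
      Z_toReal m]
    ring
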